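/- For P ∈ H_{p,q} with n + p + q − 1 > 0, the polynomial z_j P(z) − (|z|²/(n+p+q−1)) ∂P/∂z̄_j is harmonic; consequently z_j P(z) admits the decomposition z_j P(z) = P₀(z) + (|z|²/(n+p+q−1)) ∂P/∂z̄_j with P₀ ∈ H_{p+1,q}. -/

import Mathlib

open Complex

noncomputable section

/-- Wirtinger derivative ∂/∂z_j = (1/2)(∂/∂x_j − i ∂/∂y_j). -/
def wderiv {n : ℕ} (j : Fin n) (f : (Fin n → ℂ) → ℂ) (z : Fin n → ℂ) : ℂ :=
  (1 / 2 : ℂ) * (fderiv ℝ f z (Pi.single j 1) - Complex.I * fderiv ℝ f z (Pi.single j Complex.I))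

/-- Conjugate Wirtinger derivative ∂/∂z̄_j = (1/2)(∂/∂x_j + i ∂/∂y_j). -/
def wderivBar {n : ℕ} (j : Fin n) (f : (Fin n → ℂ) → ℂ) (z : Fin n → ℂ) : ℂ :=
  (1 / 2 : ℂ) * (fderiv ℝ f z (Pi.single j 1) + Complex.I * fderiv ℝ f z (Pi.single j Complex.I))

/-- The Laplacian on ℂⁿ ≅ ℝ^{2n}: Δ = 4 Σ_k ∂²/(∂z_k ∂z̄_k). -/
def lap {n : ℕ} (f : (Fin n → ℂ) → ℂ) (z : Fin n → ℂ) : ℂ :=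
  4 * ∑ k, wderiv k (fun w => wderivBar k f w) z

/-- `f` is a polynomial in `z` and `z̄`. -/
def IsPolyZZbar {n : ℕ} (f : (Fin n → ℂ) → ℂ) : Prop :=
  ∃ Q : MvPolynomial ((Fin n) ⊕ (Fin n)) ℂ,
    ∀ z, f z = MvPolynomial.eval (Sum.elim z (fun j => (starRingEnd ℂ) (z j))) Q

/-- `|z|²` as a complex number: `∑ z_k z̄_k`. -/
def nsq {n : ℕ} (z : Fin n → ℂ) : ℂ := ∑ k, z k * (starRingEnd ℂ) (z k)

/-- `f` is bigraded homogeneous of bidegree `(p,q)`: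
`f(λz) = λ^p λ̄^q f(z)` for all `λ ∈ ℂ`. -/
def BiHomogeneous {n : ℕ} (p q : ℕ) (f : (Fin n → ℂ) → ℂ) : Prop :=
  ∀ (c : ℂ) (z : Fin n → ℂ), f (c • z) = c ^ p * (starRingEnd ℂ) c ^ q * f z

/-- `f` belongs to `H_{p,q}`: a bigraded harmonic polynomial of bidegree `(p,q)`. -/
def IsBigradedHarmonic {n : ℕ} (p q : ℕ) (f : (Fin n → ℂ) → ℂ) : Prop :=
  IsPolyZZbar f ∧ BiHomogeneous p q f ∧ ∀ z, lap f z = 0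

/-! ### Auxiliary material -/

open MvPolynomial

section Aux

variable {n : ℕ}

/-- The point `(z, z̄)` in `ℂ^{2n}`. -/
def amap (z : Fin n → ℂ) : (Fin n ⊕ Fin n) → ℂ := Sum.elim z fun j => (starRingEnd ℂ) (z j)

/-- The real-linear map `v ↦ ∑ (a_k v_k + b_k v̄_k)`. -/
def dmap (a b : Fin n → ℂ) : (Fin n → ℂ) →L[ℝ] ℂ :=
  LinearMap.toContinuousLinearMap
  { toFun := fun v => ∑ k, (a k * v k + b k * (starRingEnd ℂ) (v k))
    map_add' := by
      intro v w
      rw [← Finset.sum_add_distrib]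
      refine Finset.sum_congr rfl fun k _ => ?_
      simp only [Pi.add_apply, map_add]; ring
    map_smul' := by
      intro r v
      simp only [Pi.smul_apply, Complex.real_smul, map_mul, Complex.conj_ofReal,
        RingHom.id_apply, smul_eq_mul, Finset.mul_sum]
      refine Finset.sum_congr rfl fun k _ => ?_
      ring }

lemma dmap_apply (a b v : Fin n → ℂ) :
    dmap a b v = ∑ k, (a k * v k + b k * (starRingEnd ℂ) (v k)) := rfl

lemma dmap_single (a b : Fin n → ℂ) (j : Fin n) (c : ℂ) :
    dmap a b (Pi.single j c) = a j * c + b j * (starRingEnd ℂ) c := by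
  rw [dmap_apply, Finset.sum_eq_single j]
  · simp
  · intro k _ hk
    simp [Pi.single_eq_of_ne hk]
  · simp

theorem hasFDerivAt_evalA (Q : MvPolynomial (Fin n ⊕ Fin n) ℂ) (z : Fin n → ℂ) :
    HasFDerivAt (fun w => eval (amap w) Q)
      (dmap (fun k => eval (amap z) (pderiv (Sum.inl k) Q))
            (fun k => eval (amap z) (pderiv (Sum.inr k) Q))) z := by
  induction Q using MvPolynomial.induction_on with
  | C a =>
      have h0 : dmap (n := n) (fun k => eval (amap z) (pderiv (Sum.inl k) (C a)))
          (fun k => eval (amap z) (pderiv (Sum.inr k) (C a))) = 0 := by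
        ext v; simp [dmap_apply, pderiv_C]
      rw [h0]
      simp only [eval_C]
      exact hasFDerivAt_const a z
  | add f g hf hg =>
      have h0 : dmap (n := n) (fun k => eval (amap z) (pderiv (Sum.inl k) (f + g)))
            (fun k => eval (amap z) (pderiv (Sum.inr k) (f + g)))
          = dmap (fun k => eval (amap z) (pderiv (Sum.inl k) f))
              (fun k => eval (amap z) (pderiv (Sum.inr k) f))
            + dmap (fun k => eval (amap z) (pderiv (Sum.inl k) g))
              (fun k => eval (amap z) (pderiv (Sum.inr k) g)) := by
        ext v
        simp only [dmap_apply, map_add, ContinuousLinearMap.add_apply, ← Finset.sum_add_distrib]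
        refine Finset.sum_congr rfl fun k _ => ?_
        ring
      rw [h0]
      simp only [eval_add]
      exact hf.add hg
  | mul_X f i hf =>
      have hXi : HasFDerivAt (fun w => amap w i)
          (dmap (fun k => eval (amap z) (pderiv (Sum.inl k) (X i)))
                (fun k => eval (amap z) (pderiv (Sum.inr k) (X i)))) z := by
        cases i with
        | inl m =>
            have h0 : dmap (n := n) (fun k => eval (amap z) (pderiv (Sum.inl k) (X (Sum.inl m))))
                  (fun k => eval (amap z) (pderiv (Sum.inr k) (X (Sum.inl m))))
                = (ContinuousLinearMap.proj (R := ℝ) (φ := fun _ : Fin n => ℂ) m) := by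
              ext v
              simp only [dmap_apply, pderiv_X, ContinuousLinearMap.proj_apply]
              rw [Finset.sum_eq_single m] <;>
                simp +contextual [Pi.single_apply, Sum.inl.injEq, eq_comm]
            rw [h0]
            exact (ContinuousLinearMap.proj (R := ℝ) (φ := fun _ : Fin n => ℂ) m).hasFDerivAt
        | inr m =>
            have h0 : dmap (n := n) (fun k => eval (amap z) (pderiv (Sum.inl k) (X (Sum.inr m))))
                  (fun k => eval (amap z) (pderiv (Sum.inr k) (X (Sum.inr m))))
                = (Complex.conjCLE.toContinuousLinearMap.comp
                    (ContinuousLinearMap.proj (R := ℝ) (φ := fun _ : Fin n => ℂ) m)) := by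
              ext v
              simp only [dmap_apply, pderiv_X, ContinuousLinearMap.comp_apply,
                ContinuousLinearMap.proj_apply, ContinuousLinearEquiv.coe_coe,
                Complex.conjCLE_apply]
              rw [Finset.sum_eq_single m] <;>
                simp +contextual [Pi.single_apply, Sum.inr.injEq, eq_comm]
            rw [h0]
            exact ((Complex.conjCLE.toContinuousLinearMap.comp
              (ContinuousLinearMap.proj (R := ℝ) (φ := fun _ : Fin n => ℂ) m))).hasFDerivAt
      have hmul := hf.mul hXi
      have h0 : dmap (n := n) (fun k => eval (amap z) (pderiv (Sum.inl k) (f * X i)))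
            (fun k => eval (amap z) (pderiv (Sum.inr k) (f * X i)))
          = eval (amap z) f • (dmap (fun k => eval (amap z) (pderiv (Sum.inl k) (X i)))
                (fun k => eval (amap z) (pderiv (Sum.inr k) (X i))))
            + amap z i • dmap (fun k => eval (amap z) (pderiv (Sum.inl k) f))
                (fun k => eval (amap z) (pderiv (Sum.inr k) f)) := by
        ext v
        simp only [dmap_apply, ContinuousLinearMap.add_apply, ContinuousLinearMap.coe_smul',
          Pi.smul_apply, smul_eq_mul, pderiv_mul, eval_add, eval_mul, eval_X, Finset.mul_sum,
          ← Finset.sum_add_distrib]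
        refine Finset.sum_congr rfl fun k _ => ?_
        ring
      rw [h0]
      have : (fun w => eval (amap w) (f * X i)) = fun w => eval (amap w) f * amap w i := by
        funext w; simp [eval_mul]
      rw [this]
      exact hmul

lemma wderiv_evalA (Q : MvPolynomial (Fin n ⊕ Fin n) ℂ) (j : Fin n) (z : Fin n → ℂ) :
    wderiv j (fun w => eval (amap w) Q) z = eval (amap z) (pderiv (Sum.inl j) Q) := by
  unfold wderiv
  rw [(hasFDerivAt_evalA Q z).fderiv, dmap_single, dmap_single]
  simp only [map_one, Complex.conj_I]
  ring_nf
  simp [Complex.I_sq]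
  ring

lemma wderivBar_evalA (Q : MvPolynomial (Fin n ⊕ Fin n) ℂ) (j : Fin n) (z : Fin n → ℂ) :
    wderivBar j (fun w => eval (amap w) Q) z = eval (amap z) (pderiv (Sum.inr j) Q) := by
  unfold wderivBar
  rw [(hasFDerivAt_evalA Q z).fderiv, dmap_single, dmap_single]
  simp only [map_one, Complex.conj_I]
  ring_nf
  simp [Complex.I_sq]
  ring

lemma wderivBar_congr (f g : (Fin n → ℂ) → ℂ) (h : ∀ w, f w = g w) (j : Fin n) (z : Fin n → ℂ) :
    wderivBar j f z = wderivBar j g z := by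
  rw [funext h]

lemma lap_evalA (Q : MvPolynomial (Fin n ⊕ Fin n) ℂ) (z : Fin n → ℂ) :
    lap (fun w => eval (amap w) Q) z
      = 4 * ∑ k, eval (amap z) (pderiv (Sum.inl k) (pderiv (Sum.inr k) Q)) := by
  unfold lap
  congr 1
  refine Finset.sum_congr rfl fun k _ => ?_
  have h : (fun w => wderivBar k (fun w' => eval (amap w') Q) w)
      = fun w => eval (amap w) (pderiv (Sum.inr k) Q) := funext fun w => wderivBar_evalA Q k w
  rw [h, wderiv_evalA]

/-- Scalar multiplication by `c : ℂ` as a real continuous linear map. -/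
def smulCLM (c : ℂ) : (Fin n → ℂ) →L[ℝ] (Fin n → ℂ) :=
  LinearMap.toContinuousLinearMap
  { toFun := fun v => c • v
    map_add' := fun v w => smul_add c v w
    map_smul' := fun r v => by simp [smul_comm r c v] }

lemma smulCLM_apply (c : ℂ) (v : Fin n → ℂ) : smulCLM c v = c • v := rfl

lemma single_smul' (c x : ℂ) (j : Fin n) :
    c • Pi.single (M := fun _ : Fin n => ℂ) j x
      = Pi.single (M := fun _ : Fin n => ℂ) j (c * x) := by
  funext k
  by_cases h : k = j
  · subst h; simp
  · simp [Pi.single_eq_of_ne h]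

lemma wderivBar_comp_smul (Q : MvPolynomial (Fin n ⊕ Fin n) ℂ) (c : ℂ) (j : Fin n)
    (z : Fin n → ℂ) :
    wderivBar j (fun w => eval (amap (c • w)) Q) z
      = (starRingEnd ℂ) c * eval (amap (c • z)) (pderiv (Sum.inr j) Q) := by
  have hcomp : HasFDerivAt (fun w => eval (amap (c • w)) Q)
      ((dmap (fun k => eval (amap (c • z)) (pderiv (Sum.inl k) Q))
            (fun k => eval (amap (c • z)) (pderiv (Sum.inr k) Q))).comp (smulCLM c)) z :=
    (hasFDerivAt_evalA Q (c • z)).comp z (smulCLM c).hasFDerivAt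
  unfold wderivBar
  rw [hcomp.fderiv]
  simp only [ContinuousLinearMap.comp_apply, smulCLM_apply, single_smul', mul_one,
    dmap_single, map_mul, Complex.conj_I]
  ring_nf
  simp [Complex.I_sq]
  ring

theorem eulerA (p q : ℕ) (Q : MvPolynomial (Fin n ⊕ Fin n) ℂ)
    (hHom : BiHomogeneous p q (fun w => eval (amap w) Q)) (z : Fin n → ℂ) :
    ∑ k, (z k * eval (amap z) (pderiv (Sum.inl k) Q)
        + (starRingEnd ℂ) (z k) * eval (amap z) (pderiv (Sum.inr k) Q))
      = ((p : ℂ) + q) * eval (amap z) Q := by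
  have hc : HasDerivAt (fun t : ℝ => z + t • z) z 0 := by
    simpa using ((hasDerivAt_id (0 : ℝ)).smul_const z).const_add z
  have hF : HasFDerivAt (fun w => eval (amap w) Q)
      (dmap (fun k => eval (amap z) (pderiv (Sum.inl k) Q))
            (fun k => eval (amap z) (pderiv (Sum.inr k) Q))) (z + (0 : ℝ) • z) := by
    rw [show z + (0 : ℝ) • z = z by simp]
    exact hasFDerivAt_evalA Q z
  have h1 : HasDerivAt (fun t : ℝ => eval (amap (z + t • z)) Q)
      (dmap (fun k => eval (amap z) (pderiv (Sum.inl k) Q))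
            (fun k => eval (amap z) (pderiv (Sum.inr k) Q)) z) 0 :=
    HasFDerivAt.comp_hasDerivAt (l := fun w => eval (amap w) Q) (f := fun t : ℝ => z + t • z) 0 hF hc
  have hr : HasDerivAt (fun t : ℝ => (1 + t) ^ (p + q)) ((p + q : ℝ)) 0 := by
    have := ((hasDerivAt_id (0 : ℝ)).const_add 1).fun_pow (p + q)
    simpa using this
  have h2 : HasDerivAt (fun t : ℝ => (((1 + t) ^ (p + q) : ℝ) : ℂ) * eval (amap z) Q)
      (((p : ℂ) + q) * eval (amap z) Q) 0 := by
    have := (hr.ofReal_comp).mul_const (eval (amap z) Q)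
    rw [show (((p + q : ℝ)) : ℂ) = ((p : ℂ) + q) by push_cast; ring] at this
    exact this
  have heq : (fun t : ℝ => eval (amap (z + t • z)) Q)
      = fun t : ℝ => (((1 + t) ^ (p + q) : ℝ) : ℂ) * eval (amap z) Q := by
    funext t
    have hsm : (((1 + t : ℝ) : ℂ)) • z = z + t • z := by
      funext k
      simp [Complex.real_smul]
      ring
    have h := hHom (((1 + t : ℝ) : ℂ)) z
    rw [hsm, Complex.conj_ofReal, ← pow_add] at h
    refine h.trans ?_
    push_cast
    ring
  rw [heq] at h1
  have h3 := h1.unique h2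
  rw [dmap_apply] at h3
  rw [show (∑ k, (z k * eval (amap z) (pderiv (Sum.inl k) Q)
        + (starRingEnd ℂ) (z k) * eval (amap z) (pderiv (Sum.inr k) Q)))
      = ∑ k, (eval (amap z) (pderiv (Sum.inl k) Q) * z k
        + eval (amap z) (pderiv (Sum.inr k) Q) * (starRingEnd ℂ) (z k)) from
    Finset.sum_congr rfl fun k _ => by ring]
  exact h3

lemma pderiv_comm' {σ R : Type*} [DecidableEq σ] [CommSemiring R] (i i' : σ)
    (Q : MvPolynomial σ R) :
    pderiv i (pderiv i' Q) = pderiv i' (pderiv i Q) := by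
  induction Q using MvPolynomial.induction_on with
  | C a => simp [pderiv_C]
  | add f g hf hg => simp [map_add, hf, hg]
  | mul_X f s hf =>
      simp only [pderiv_mul, pderiv_X, map_add, Pi.single_apply]
      split_ifs with h h' <;>
        simp [pderiv_mul, hf, pderiv_one, map_zero, add_comm, add_left_comm]

/-- The polynomial `∑ z_k z̄_k`. -/
def NNp (n : ℕ) : MvPolynomial (Fin n ⊕ Fin n) ℂ := ∑ k, X (Sum.inl k) * X (Sum.inr k)

lemma NNp_pd_inr (k : Fin n) : pderiv (Sum.inr k) (NNp n) = X (Sum.inl k) := by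
  rw [NNp, map_sum, Finset.sum_eq_single k]
  · simp [pderiv_mul]
  · intro m _ hm
    simp [pderiv_mul, pderiv_X_of_ne, Pi.single_apply, Sum.inr.injEq, (Ne.symm hm)]
  · simp

lemma NNp_pd_inl (k : Fin n) : pderiv (Sum.inl k) (NNp n) = X (Sum.inr k) := by
  rw [NNp, map_sum, Finset.sum_eq_single k]
  · simp [pderiv_mul]
  · intro m _ hm
    simp [pderiv_mul, pderiv_X_of_ne, Pi.single_apply, Sum.inl.injEq, (Ne.symm hm)]
  · simp

lemma eval_NNp (z : Fin n → ℂ) : eval (amap z) (NNp n) = nsq z := by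
  simp [NNp, nsq, amap]

lemma pd_Q' (Q : MvPolynomial (Fin n ⊕ Fin n) ℂ) (j k : Fin n) (μ : ℂ) :
    pderiv (Sum.inl k) (pderiv (Sum.inr k)
        (X (Sum.inl j) * Q - C μ * (NNp n * pderiv (Sum.inr j) Q)))
      = ((if j = k then pderiv (Sum.inr k) Q else 0)
          + X (Sum.inl j) * pderiv (Sum.inl k) (pderiv (Sum.inr k) Q))
        - C μ * ((pderiv (Sum.inr j) Q
            + (X (Sum.inl k) * pderiv (Sum.inl k) (pderiv (Sum.inr j) Q)
              + X (Sum.inr k) * pderiv (Sum.inr k) (pderiv (Sum.inr j) Q)))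
          + NNp n * pderiv (Sum.inl k) (pderiv (Sum.inr k) (pderiv (Sum.inr j) Q))) := by
  simp only [map_sub, map_add, pderiv_mul, pderiv_C, pderiv_X, NNp_pd_inr, NNp_pd_inl,
    pderiv_X_self, Pi.single_apply, Sum.inl.injEq, Sum.inr.injEq, zero_mul, mul_zero,
    zero_add, add_zero, map_zero, ite_mul, one_mul, mul_ite,
    reduceCtorEq, if_false, apply_ite (pderiv (Sum.inl k))]
  split_ifs with h
  · ring
  · ring

end Aux

theorem stmt3 {n : ℕ} (p q : ℕ) (P : (Fin n → ℂ) → ℂ)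
    (hP : IsBigradedHarmonic p q P) (hnpq : 0 < n + p + q - 1) (j : Fin n) :
    (∀ z, lap (fun w => w j * P w - nsq w / ((n : ℂ) + p + q - 1) * wderivBar j P w) z = 0) ∧
      ∃ P₀ : (Fin n → ℂ) → ℂ, IsBigradedHarmonic (p + 1) q P₀ ∧
        ∀ z, z j * P z = P₀ z + nsq z / ((n : ℂ) + p + q - 1) * wderivBar j P z := by
  obtain ⟨⟨Q, hQ⟩, hHom, hLap⟩ := hP
  have hPf : P = fun w => eval (amap w) Q := funext fun z => hQ z
  subst hPf
  have hamapl : ∀ (w : Fin n → ℂ) (k : Fin n), amap w (Sum.inl k) = w k := fun _ _ => rfl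
  have hamapr : ∀ (w : Fin n → ℂ) (k : Fin n),
    amap w (Sum.inr k) = (starRingEnd ℂ) (w k) := fun _ _ => rfl
  have hHom' : ∀ (c : ℂ) (w : Fin n → ℂ),
      eval (amap (c • w)) Q = c ^ p * (starRingEnd ℂ) c ^ q * eval (amap w) Q :=
    fun c w => hHom c w
  -- the constant κ and its nonvanishing
  have hcast : ((n + p + q - 1 : ℕ) : ℂ) = (n : ℂ) + p + q - 1 := by
    have h1 : 1 ≤ n + p + q := by omega
    rw [Nat.cast_sub h1]
    push_cast
    ring
  have hκ : ((n : ℂ) + p + q - 1) ≠ 0 := by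
    rw [← hcast]
    exact Nat.cast_ne_zero.mpr (by omega)
  set μ : ℂ := ((n : ℂ) + p + q - 1)⁻¹ with hμ
  -- the candidate polynomial
  set Q' : MvPolynomial (Fin n ⊕ Fin n) ℂ :=
    X (Sum.inl j) * Q - C μ * (NNp n * pderiv (Sum.inr j) Q) with hQ'def
  -- harmonicity of Q (pointwise)
  have hDQ : ∀ z : Fin n → ℂ,
      ∑ k, eval (amap z) (pderiv (Sum.inl k) (pderiv (Sum.inr k) Q)) = 0 := by
    intro z
    have h := hLap z
    rw [lap_evalA] at h
    have h4 : (4 : ℂ) ≠ 0 := by norm_num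
    exact (mul_eq_zero.mp h).resolve_left h4
  -- harmonicity of ∂̄_j Q (pointwise)
  have hDR : ∀ z : Fin n → ℂ,
      ∑ k, eval (amap z)
        (pderiv (Sum.inl k) (pderiv (Sum.inr k) (pderiv (Sum.inr j) Q))) = 0 := by
    intro z
    have hDQz : ∀ w : Fin n → ℂ,
        eval (amap w) (∑ k, pderiv (Sum.inl k) (pderiv (Sum.inr k) Q))
          = eval (amap w) (0 : MvPolynomial (Fin n ⊕ Fin n) ℂ) := by
      intro w
      simp only [map_sum, map_zero]
      exact hDQ w
    have h := wderivBar_congr _ _ hDQz j z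
    rw [wderivBar_evalA, wderivBar_evalA] at h
    have hcomm : pderiv (Sum.inr j) (∑ k, pderiv (Sum.inl k) (pderiv (Sum.inr k) Q))
        = ∑ k, pderiv (Sum.inl k) (pderiv (Sum.inr k) (pderiv (Sum.inr j) Q)) := by
      rw [map_sum]
      refine Finset.sum_congr rfl fun k _ => ?_
      rw [pderiv_comm' (Sum.inr j) (Sum.inl k), pderiv_comm' (Sum.inr j) (Sum.inr k)]
    rw [hcomm] at h
    simpa [map_sum] using h
  -- Euler identity for Q (pointwise)
  have hEuler : ∀ z : Fin n → ℂ,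
      ∑ k, (z k * eval (amap z) (pderiv (Sum.inl k) Q)
          + (starRingEnd ℂ) (z k) * eval (amap z) (pderiv (Sum.inr k) Q))
        = ((p : ℂ) + q) * eval (amap z) Q := eulerA p q Q hHom
  -- Euler identity for ∂̄_j Q (pointwise)
  have hEulerR : ∀ z : Fin n → ℂ,
      ∑ k, (z k * eval (amap z) (pderiv (Sum.inl k) (pderiv (Sum.inr j) Q))
          + (starRingEnd ℂ) (z k) * eval (amap z) (pderiv (Sum.inr k) (pderiv (Sum.inr j) Q)))
        = ((p : ℂ) + q - 1) * eval (amap z) (pderiv (Sum.inr j) Q) := by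
    intro z
    have hEP : ∀ w : Fin n → ℂ,
        eval (amap w) (∑ k, (X (Sum.inl k) * pderiv (Sum.inl k) Q
            + X (Sum.inr k) * pderiv (Sum.inr k) Q))
          = eval (amap w) (C ((p : ℂ) + q) * Q) := by
      intro w
      rw [eval_mul, eval_C]
      rw [map_sum]
      simp only [eval_add, eval_mul, eval_X]
      simpa [amap] using hEuler w
    have h := wderivBar_congr _ _ hEP j z
    rw [wderivBar_evalA, wderivBar_evalA] at h
    have hterm : ∀ k : Fin n,
        pderiv (Sum.inr j) (X (Sum.inl k) * pderiv (Sum.inl k) Q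
            + X (Sum.inr k) * pderiv (Sum.inr k) Q)
          = (X (Sum.inl k) * pderiv (Sum.inl k) (pderiv (Sum.inr j) Q)
              + X (Sum.inr k) * pderiv (Sum.inr k) (pderiv (Sum.inr j) Q))
            + (if k = j then pderiv (Sum.inr k) Q else 0) := by
      intro k
      rw [map_add, pderiv_mul, pderiv_mul, pderiv_comm' (Sum.inr j) (Sum.inl k) Q,
        pderiv_comm' (Sum.inr j) (Sum.inr k) Q]
      simp only [pderiv_X, Pi.single_apply, Sum.inr.injEq, reduceCtorEq, if_false,
        zero_mul, zero_add, ite_mul, one_mul]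
      split_ifs with hkj
      · subst hkj; ring
      · ring
    have hEPpoly : pderiv (Sum.inr j) (∑ k, (X (Sum.inl k) * pderiv (Sum.inl k) Q
            + X (Sum.inr k) * pderiv (Sum.inr k) Q))
        = (∑ k, (X (Sum.inl k) * pderiv (Sum.inl k) (pderiv (Sum.inr j) Q)
              + X (Sum.inr k) * pderiv (Sum.inr k) (pderiv (Sum.inr j) Q)))
          + pderiv (Sum.inr j) Q := by
      rw [map_sum]
      simp_rw [hterm]
      rw [Finset.sum_add_distrib]
      congr 1
      simp [Finset.sum_ite_eq']
    rw [hEPpoly] at h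
    have hj : pderiv (Sum.inr j) (C ((p : ℂ) + q) * Q)
        = C ((p : ℂ) + q) * pderiv (Sum.inr j) Q := by
      rw [pderiv_mul, pderiv_C]; ring
    rw [hj] at h
    simp only [map_add, map_sum, eval_mul, eval_C, eval_add, eval_X] at h
    have h' : (∑ k, (z k * eval (amap z) (pderiv (Sum.inl k) (pderiv (Sum.inr j) Q))
          + (starRingEnd ℂ) (z k) * eval (amap z) (pderiv (Sum.inr k) (pderiv (Sum.inr j) Q))))
          + eval (amap z) (pderiv (Sum.inr j) Q)
        = ((p : ℂ) + q) * eval (amap z) (pderiv (Sum.inr j) Q) := by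
      simpa [amap] using h
    linear_combination h'
  -- the key sum for Q'
  have hsum' : ∀ z : Fin n → ℂ,
      ∑ k, eval (amap z) (pderiv (Sum.inl k) (pderiv (Sum.inr k) Q')) = 0 := by
    intro z
    have e1 : ∑ k, eval (amap z) (pderiv (Sum.inl k) (pderiv (Sum.inr k) Q'))
        = ∑ k, ((if j = k then eval (amap z) (pderiv (Sum.inr k) Q) else 0)
            + z j * eval (amap z) (pderiv (Sum.inl k) (pderiv (Sum.inr k) Q))
            - μ * ((eval (amap z) (pderiv (Sum.inr j) Q)
                + (z k * eval (amap z) (pderiv (Sum.inl k) (pderiv (Sum.inr j) Q))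
                  + (starRingEnd ℂ) (z k)
                      * eval (amap z) (pderiv (Sum.inr k) (pderiv (Sum.inr j) Q))))
              + nsq z * eval (amap z)
                  (pderiv (Sum.inl k) (pderiv (Sum.inr k) (pderiv (Sum.inr j) Q))))) := by
      refine Finset.sum_congr rfl fun k _ => ?_
      rw [hQ'def, pd_Q' Q j k μ]
      simp only [eval_sub, eval_add, eval_mul, eval_C, eval_X, eval_NNp,
        apply_ite (eval (amap z)), eval_zero, map_zero, hamapl, hamapr]
    rw [e1]
    rw [Finset.sum_sub_distrib, Finset.sum_add_distrib, ← Finset.mul_sum, ← Finset.mul_sum]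
    rw [Finset.sum_add_distrib, Finset.sum_add_distrib, Finset.sum_const, ← Finset.mul_sum]
    rw [hDQ z, hDR z, hEulerR z]
    simp only [Finset.sum_ite_eq, Finset.mem_univ, if_true, Finset.card_univ,
      Fintype.card_fin, nsmul_eq_mul, mul_zero, add_zero]
    rw [hμ]
    field_simp
    ring
  -- pointwise description of Q'
  have hg : ∀ w : Fin n → ℂ,
      eval (amap w) Q' = w j * eval (amap w) Q
        - nsq w / ((n : ℂ) + p + q - 1) * eval (amap w) (pderiv (Sum.inr j) Q) := by
    intro w
    rw [hQ'def]
    simp only [eval_sub, eval_mul, eval_C, eval_X, eval_NNp, hamapl]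
    rw [hμ, div_eq_mul_inv]
    ring
  -- part 1: harmonicity
  have hmain1 : ∀ z, lap (fun w => eval (amap w) Q') z = 0 := by
    intro z
    rw [lap_evalA, hsum' z, mul_zero]
  have hlam : (fun w => w j * (fun w' => eval (amap w') Q) w
        - nsq w / ((n : ℂ) + p + q - 1) * wderivBar j (fun w' => eval (amap w') Q) w)
      = fun w => eval (amap w) Q' := by
    funext w
    rw [wderivBar_evalA]
    exact (hg w).symm
  constructor
  · intro z
    rw [hlam]
    exact hmain1 z
  · refine ⟨fun w => eval (amap w) Q', ⟨⟨Q', fun z => rfl⟩, ?_, ?_⟩, ?_⟩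
    · -- bihomogeneity
      intro c z
      show eval (amap (c • z)) Q'
        = c ^ (p + 1) * (starRingEnd ℂ) c ^ q * eval (amap z) Q'
      have hWhom : (starRingEnd ℂ) c * eval (amap (c • z)) (pderiv (Sum.inr j) Q)
          = c ^ p * (starRingEnd ℂ) c ^ q * eval (amap z) (pderiv (Sum.inr j) Q) := by
        have h2 : ∀ w : Fin n → ℂ, eval (amap (c • w)) Q
            = eval (amap w) (C (c ^ p * (starRingEnd ℂ) c ^ q) * Q) := by
          intro w
          rw [eval_mul, eval_C]
          exact hHom' c w
        have h3 := wderivBar_congr _ _ h2 j z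
        rw [wderivBar_comp_smul, wderivBar_evalA] at h3
        have hj : pderiv (Sum.inr j) (C (c ^ p * (starRingEnd ℂ) c ^ q) * Q)
            = C (c ^ p * (starRingEnd ℂ) c ^ q) * pderiv (Sum.inr j) Q := by
          rw [pderiv_mul, pderiv_C]; ring
        rw [hj, eval_mul, eval_C] at h3
        exact h3
      have hz1 : (c • z) j = c * z j := rfl
      have hnq : nsq (c • z) = c * (starRingEnd ℂ) c * nsq z := by
        simp only [nsq, Pi.smul_apply, smul_eq_mul, map_mul, Finset.mul_sum]
        refine Finset.sum_congr rfl fun k _ => ?_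
        ring
      rw [hg (c • z), hg z, hz1, hHom' c z, hnq]
      linear_combination (-(c * nsq z / ((n : ℂ) + p + q - 1))) * hWhom
    · -- harmonicity
      exact hmain1
    · -- decomposition
      intro z
      show z j * eval (amap z) Q
        = eval (amap z) Q' + nsq z / ((n : ℂ) + p + q - 1)
            * wderivBar j (fun w' => eval (amap w') Q) z
      rw [wderivBar_evalA, hg z]
      ring
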